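/- Let P(x,y) be a complex Laurent polynomial in two variables and let M = max_{|x|=|y|=1} |P(x,y)|. For every complex number t with |t| > M, the Mahler measure of F_t := t - P satisfies M(F_t) = |Q(t)|^{-1}, where Q(t) := t^{-1} exp( Σ_{n≥1} c_n t^{-n}/n ) and c_n is the constant term of the Laurent polynomial P^n (the series converging absolutely). -/

import Mathlib

/-- Evaluation of a Laurent polynomial in two variables (an element of the group algebra
`ℂ[ℤ × ℤ]`) at a point `(x, y)` with `x, y ≠ 0`. -/
noncomputable def lpEval (P : AddMonoidAlgebra ℂ (ℤ × ℤ)) (x y : ℂ) : ℂ :=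
  ∑ m ∈ P.coeff.support, P.coeff m * x ^ m.1 * y ^ m.2

open intervalIntegral MeasureTheory

-- zpow of exp as exp
lemma expI_zpow (k : ℤ) (θ : ℝ) :
    Complex.exp (θ * Complex.I) ^ k = Complex.exp ((k * Complex.I) * θ) := by
  rw [← Complex.exp_int_mul]; ring_nf

lemma continuous_expI_zpow (k : ℤ) :
    Continuous fun θ : ℝ => Complex.exp (θ * Complex.I) ^ k := by
  simp only [expI_zpow]
  exact Complex.continuous_exp.comp (continuous_const.mul Complex.continuous_ofReal)

lemma integral_expI_zpow (k : ℤ) :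
    (∫ θ in (0:ℝ)..(2 * Real.pi), Complex.exp (θ * Complex.I) ^ k)
      = if k = 0 then (2 * Real.pi : ℂ) else 0 := by
  simp only [expI_zpow]
  rcases eq_or_ne k 0 with rfl | hk
  · simp
  · rw [if_neg hk, integral_exp_mul_complex (by simp [hk, Complex.I_ne_zero])]
    have h1 : Complex.exp ((k * Complex.I) * (2 * Real.pi)) = 1 := by
      rw [show ((k : ℂ) * Complex.I) * (2 * Real.pi) = k * (2 * Real.pi * Complex.I) by ring]
      exact Complex.exp_int_mul_two_pi_mul_I k
    simp [h1]

lemma continuous_lpEval_snd (Q : AddMonoidAlgebra ℂ (ℤ × ℤ)) (x : ℂ) :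
    Continuous fun φ : ℝ => lpEval Q x (Complex.exp (φ * Complex.I)) := by
  unfold lpEval
  exact continuous_finset_sum _ fun m _ =>
    (continuous_const.mul continuous_const).mul (continuous_expI_zpow m.2)

lemma inner_int (Q : AddMonoidAlgebra ℂ (ℤ × ℤ)) (x : ℂ) :
    (∫ φ in (0:ℝ)..(2 * Real.pi), lpEval Q x (Complex.exp (φ * Complex.I)))
      = ∑ m ∈ Q.coeff.support, Q.coeff m * x ^ m.1 * (if m.2 = 0 then (2 * Real.pi : ℂ) else 0) := by
  unfold lpEval
  rw [intervalIntegral.integral_finset_sum]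
  · refine Finset.sum_congr rfl fun m _ => ?_
    rw [intervalIntegral.integral_const_mul, integral_expI_zpow]
  · intro m _
    exact ((continuous_const.mul continuous_const).mul
      (continuous_expI_zpow m.2)).intervalIntegrable _ _

lemma continuous_innerSum (Q : AddMonoidAlgebra ℂ (ℤ × ℤ)) :
    Continuous fun θ : ℝ =>
      ∑ m ∈ Q.coeff.support, Q.coeff m * Complex.exp (θ * Complex.I) ^ m.1
        * (if m.2 = 0 then (2 * Real.pi : ℂ) else 0) :=
  continuous_finset_sum _ fun m _ =>
    ((continuous_const.mul (continuous_expI_zpow m.1)).mul continuous_const)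

lemma double_int (Q : AddMonoidAlgebra ℂ (ℤ × ℤ)) :
    (∫ θ in (0:ℝ)..(2 * Real.pi), ∫ φ in (0:ℝ)..(2 * Real.pi),
      lpEval Q (Complex.exp (θ * Complex.I)) (Complex.exp (φ * Complex.I)))
        = (2 * Real.pi : ℂ) ^ 2 * Q.coeff 0 := by
  simp only [inner_int]
  rw [intervalIntegral.integral_finset_sum]
  swap
  · intro m _
    exact ((continuous_const.mul (continuous_expI_zpow m.1)).mul
      continuous_const).intervalIntegrable _ _
  have key : ∀ m : ℤ × ℤ, (∫ θ in (0:ℝ)..(2 * Real.pi),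
      Q.coeff m * Complex.exp (θ * Complex.I) ^ m.1 * (if m.2 = 0 then (2 * Real.pi : ℂ) else 0))
      = if m = 0 then (2 * Real.pi : ℂ) ^ 2 * Q.coeff m else 0 := by
    intro m
    rw [intervalIntegral.integral_mul_const, intervalIntegral.integral_const_mul,
      integral_expI_zpow]
    rcases eq_or_ne m 0 with rfl | hm
    · simp; ring
    · rw [if_neg hm]
      rcases eq_or_ne m.1 0 with h1 | h1
      · have h2 : m.2 ≠ 0 := fun h2 => hm (Prod.ext h1 h2)
        simp [h2]
      · simp [h1]
  simp only [key]
  rw [Finset.sum_ite_eq' Q.coeff.support (0 : ℤ × ℤ) (fun m => (2 * Real.pi : ℂ) ^ 2 * Q.coeff m)]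
  by_cases h : (0 : ℤ × ℤ) ∈ Q.coeff.support
  · rw [if_pos h]
  · rw [if_neg h, Finsupp.notMem_support_iff.mp h, mul_zero]

lemma lpEval_eq_liftNC {x y : ℂ} (hx : x ≠ 0) (hy : y ≠ 0) (Q : AddMonoidAlgebra ℂ (ℤ × ℤ)) :
    lpEval Q x y = AddMonoidAlgebra.liftNCRingHom (RingHom.id ℂ)
      ({ toFun := fun m => x ^ (Multiplicative.toAdd m).1 * y ^ (Multiplicative.toAdd m).2,
         map_one' := by simp,
         map_mul' := fun a b => by
           show x ^ ((Multiplicative.toAdd a) + (Multiplicative.toAdd b)).1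
              * y ^ ((Multiplicative.toAdd a) + (Multiplicative.toAdd b)).2 = _
           simp only [Prod.fst_add, Prod.snd_add, zpow_add₀ hx, zpow_add₀ hy]
           ring } : Multiplicative (ℤ × ℤ) →* ℂ)
      (fun _ _ => Commute.all _ _) Q := by
  rw [AddMonoidAlgebra.liftNCRingHom]
  show lpEval Q x y = AddMonoidAlgebra.liftNC _ _ Q
  show _ = Q.coeff.sum fun a b => (RingHom.id ℂ) b * (x ^ a.1 * y ^ a.2)
  rw [Finsupp.sum]
  refine Finset.sum_congr rfl fun m _ => ?_
  show Q.coeff m * x ^ m.1 * y ^ m.2 = Q.coeff m * (x ^ m.1 * y ^ m.2)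
  ring

lemma lpEval_pow {x y : ℂ} (hx : x ≠ 0) (hy : y ≠ 0) (P : AddMonoidAlgebra ℂ (ℤ × ℤ)) (k : ℕ) :
    lpEval (P ^ k) x y = (lpEval P x y) ^ k := by
  rw [lpEval_eq_liftNC hx hy, lpEval_eq_liftNC hx hy, map_pow]

section Main

variable (P : AddMonoidAlgebra ℂ (ℤ × ℤ))

/-- The sup of `‖P‖` on the torus. -/
noncomputable def torusSup : ℝ :=
  sSup {r : ℝ | ∃ x y : ℂ, ‖x‖ = 1 ∧ ‖y‖ = 1 ∧ r = ‖lpEval P x y‖}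

lemma torus_bound (θ φ : ℝ) :
    ‖lpEval P (Complex.exp (θ * Complex.I)) (Complex.exp (φ * Complex.I))‖ ≤ torusSup P := by
  have hset : {r : ℝ | ∃ x y : ℂ, ‖x‖ = 1 ∧ ‖y‖ = 1 ∧ r = ‖lpEval P x y‖}
      = (fun p : ℂ × ℂ => ‖lpEval P p.1 p.2‖) ''
        (Metric.sphere (0:ℂ) 1 ×ˢ Metric.sphere (0:ℂ) 1) := by
    ext r
    constructor
    · rintro ⟨x, y, hx, hy, rfl⟩
      exact ⟨(x, y), ⟨mem_sphere_zero_iff_norm.mpr hx, mem_sphere_zero_iff_norm.mpr hy⟩, rfl⟩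
    · rintro ⟨⟨x, y⟩, ⟨hx, hy⟩, rfl⟩
      exact ⟨x, y, mem_sphere_zero_iff_norm.mp hx, mem_sphere_zero_iff_norm.mp hy, rfl⟩
  have hcont : ContinuousOn (fun p : ℂ × ℂ => ‖lpEval P p.1 p.2‖)
      (Metric.sphere (0:ℂ) 1 ×ˢ Metric.sphere (0:ℂ) 1) := by
    refine ContinuousOn.norm ?_
    unfold lpEval
    refine continuousOn_finset_sum _ fun m _ => ?_
    intro p hp
    have h1 : p.1 ≠ 0 := by
      have := mem_sphere_zero_iff_norm.mp hp.1
      intro h; rw [h] at this; simp at this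
    have h2 : p.2 ≠ 0 := by
      have := mem_sphere_zero_iff_norm.mp hp.2
      intro h; rw [h] at this; simp at this
    refine ContinuousAt.continuousWithinAt ?_
    exact (continuousAt_const.mul
      ((continuousAt_zpow₀ p.1 m.1 (Or.inl h1)).comp continuous_fst.continuousAt)).mul
      ((continuousAt_zpow₀ p.2 m.2 (Or.inl h2)).comp continuous_snd.continuousAt)
  have hbdd : BddAbove {r : ℝ | ∃ x y : ℂ, ‖x‖ = 1 ∧ ‖y‖ = 1 ∧ r = ‖lpEval P x y‖} := by
    rw [hset]
    exact (((isCompact_sphere _ _).prod (isCompact_sphere _ _)).image_of_continuousOn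
      hcont).bddAbove
  exact le_csSup hbdd ⟨_, _, Complex.norm_exp_ofReal_mul_I θ,
    Complex.norm_exp_ofReal_mul_I φ, rfl⟩

lemma torusSup_nonneg : 0 ≤ torusSup P :=
  le_trans (norm_nonneg _) (torus_bound P 0 0)

end Main

lemma norm_en {t : ℂ} (n : ℕ) :
    ‖t ^ (-((n:ℤ)+1)) / ((n:ℂ)+1)‖ ≤ (‖t‖ ^ (n+1))⁻¹ := by
  have h1 : (-((n:ℤ)+1)) = -((n+1 : ℕ) : ℤ) := by push_cast; ring
  rw [norm_div, h1, norm_zpow, zpow_neg, zpow_natCast]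
  have h2 : (1:ℝ) ≤ ‖(n:ℂ)+1‖ := by
    have : ((n:ℂ)+1) = ((n+1 : ℕ) : ℂ) := by push_cast; ring
    rw [this, Complex.norm_natCast]
    exact_mod_cast Nat.one_le_iff_ne_zero.mpr (Nat.succ_ne_zero n)
  calc (‖t‖^(n+1))⁻¹ / ‖(n:ℂ)+1‖ ≤ (‖t‖^(n+1))⁻¹ / 1 := by
        gcongr
    _ = (‖t‖^(n+1))⁻¹ := by rw [div_one]

lemma mul_en_bound {t z : ℂ} {m : ℝ} (n : ℕ) (hz : ‖z‖ ≤ m) :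
    ‖z * (t ^ (-((n:ℤ)+1)) / ((n:ℂ)+1))‖ ≤ m * (‖t‖ ^ (n+1))⁻¹ := by
  rw [norm_mul]
  exact mul_le_mul hz (norm_en n) (norm_nonneg _) ((norm_nonneg z).trans hz)

lemma pointwise_hasSum {t z : ℂ} (hz : ‖z‖ < ‖t‖) :
    HasSum (fun n : ℕ => (z ^ (n+1) * (t ^ (-((n:ℤ)+1)) / ((n:ℂ)+1))).re)
      (Real.log ‖t‖ - Real.log ‖t - z‖) := by
  have htpos : 0 < ‖t‖ := lt_of_le_of_lt (norm_nonneg z) hz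
  have ht0 : t ≠ 0 := by intro h; rw [h] at htpos; simp at htpos
  have hw : ‖z / t‖ < 1 := by
    rw [norm_div, div_lt_one htpos]; exact hz
  have h1 := Complex.hasSum_taylorSeries_neg_log hw
  have h2 : HasSum (fun n : ℕ => (z/t) ^ (n+1) / ((n:ℂ)+1)) (-Complex.log (1 - z/t)) := by
    have := (hasSum_nat_add_iff' (f := fun n : ℕ => (z/t) ^ n / (n:ℂ)) 1).mpr h1
    simp only [Finset.range_one, Finset.sum_singleton, Nat.cast_zero, div_zero, sub_zero,
      Nat.cast_add, Nat.cast_one] at this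
    exact this
  have hterm : ∀ n : ℕ, (z/t) ^ (n+1) / ((n:ℂ)+1)
      = z ^ (n+1) * (t ^ (-((n:ℤ)+1)) / ((n:ℂ)+1)) := by
    intro n
    have h1' : (-((n:ℤ)+1)) = -((n+1 : ℕ) : ℤ) := by push_cast; ring
    rw [h1', zpow_neg, zpow_natCast, div_pow]
    ring
  have h3 : HasSum (fun n : ℕ => z ^ (n+1) * (t ^ (-((n:ℤ)+1)) / ((n:ℂ)+1)))
      (-Complex.log (1 - z/t)) := by
    exact h2.congr_fun fun n => (hterm n) ▸ rfl
  have h4 := Complex.hasSum_re h3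
  have hne : 1 - z/t ≠ 0 := by
    intro h
    have hzt : z/t = 1 := by linear_combination -h
    rw [hzt, norm_one] at hw
    exact lt_irrefl _ hw
  have h5 : (-Complex.log (1 - z/t)).re = Real.log ‖t‖ - Real.log ‖t - z‖ := by
    have hfac : t - z = t * (1 - z/t) := by field_simp
    have : ‖t - z‖ = ‖t‖ * ‖1 - z/t‖ := by rw [hfac, norm_mul]
    rw [Complex.neg_re, Complex.log_re, this,
      Real.log_mul (ne_of_gt htpos) (norm_ne_zero_iff.mpr hne)]
    ring
  rwa [h5] at h4

noncomputable def innerA (Q : AddMonoidAlgebra ℂ (ℤ × ℤ)) (θ : ℝ) : ℂ :=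
  ∫ φ in (0:ℝ)..(2 * Real.pi), lpEval Q (Complex.exp (θ * Complex.I)) (Complex.exp (φ * Complex.I))

lemma innerA_cont (Q : AddMonoidAlgebra ℂ (ℤ × ℤ)) : Continuous (innerA Q) := by
  unfold innerA
  simp only [inner_int]
  exact continuous_innerSum Q

lemma innerA_integral (Q : AddMonoidAlgebra ℂ (ℤ × ℤ)) :
    (∫ θ in (0:ℝ)..(2 * Real.pi), innerA Q θ) = (2 * Real.pi : ℂ) ^ 2 * Q.coeff 0 :=
  double_int Q

lemma innerA_norm_le (Q : AddMonoidAlgebra ℂ (ℤ × ℤ)) {C : ℝ}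
    (hC : ∀ θ φ : ℝ, ‖lpEval Q (Complex.exp (θ * Complex.I)) (Complex.exp (φ * Complex.I))‖ ≤ C)
    (θ : ℝ) : ‖innerA Q θ‖ ≤ C * (2 * Real.pi) := by
  have := intervalIntegral.norm_integral_le_of_norm_le_const
    (C := C) (f := fun φ : ℝ => lpEval Q (Complex.exp (θ * Complex.I))
      (Complex.exp (φ * Complex.I))) (a := 0) (b := 2 * Real.pi) (fun φ _ => hC θ φ)
  rw [sub_zero, abs_of_nonneg (by positivity)] at this
  exact this

lemma summable_geo_aux {r : ℝ} (hr0 : 0 ≤ r) (hr1 : r < 1) (C : ℝ) :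
    Summable (fun n : ℕ => C * r ^ (n + 1)) := by
  have := (summable_geometric_of_lt_one hr0 hr1).mul_left (C * r)
  refine this.congr fun n => ?_
  rw [pow_succ]
  ring

lemma hMpow_aux (P : AddMonoidAlgebra ℂ (ℤ × ℤ)) (n : ℕ) (θ φ : ℝ) :
    ‖lpEval (P ^ (n+1)) (Complex.exp (θ * Complex.I)) (Complex.exp (φ * Complex.I))‖
      ≤ torusSup P ^ (n+1) := by
  rw [lpEval_pow (Complex.exp_ne_zero _) (Complex.exp_ne_zero _), norm_pow]
  exact pow_le_pow_left₀ (norm_nonneg _) (torus_bound P θ φ) _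

lemma inner_log_int (P : AddMonoidAlgebra ℂ (ℤ × ℤ)) {t : ℂ} (hMt : torusSup P < ‖t‖) (θ : ℝ) :
    (∫ φ in (0:ℝ)..(2 * Real.pi),
        Real.log ‖t - lpEval P (Complex.exp (θ * Complex.I)) (Complex.exp (φ * Complex.I))‖)
      = 2 * Real.pi * Real.log ‖t‖
        - ∑' n : ℕ, (innerA (P ^ (n+1)) θ * (t ^ (-((n:ℤ)+1)) / ((n:ℂ)+1))).re := by
  have htpos : 0 < ‖t‖ := lt_of_le_of_lt (torusSup_nonneg P) hMt
  set M := torusSup P with hM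
  set r : ℝ := M / ‖t‖ with hr
  have hr0 : 0 ≤ r := div_nonneg (torusSup_nonneg P) htpos.le
  have hr1 : r < 1 := (div_lt_one htpos).mpr hMt
  set e : ℕ → ℂ := fun n => t ^ (-((n:ℤ)+1)) / ((n:ℂ)+1) with he
  set f : ℕ → ℝ → ℝ := fun n φ =>
    (lpEval (P ^ (n+1)) (Complex.exp (θ * Complex.I)) (Complex.exp (φ * Complex.I)) * e n).re
    with hf
  set L : ℝ → ℂ := fun φ =>
    lpEval P (Complex.exp (θ * Complex.I)) (Complex.exp (φ * Complex.I)) with hLdef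
  have hLM : ∀ φ, ‖L φ‖ < ‖t‖ := fun φ => lt_of_le_of_lt (torus_bound P θ φ) hMt
  have hrpow : ∀ n : ℕ, M ^ (n+1) * (‖t‖ ^ (n+1))⁻¹ = r ^ (n+1) := by
    intro n
    rw [hr, div_pow, div_eq_mul_inv]
  have hfs : ∀ φ : ℝ, HasSum (fun n => f n φ) (Real.log ‖t‖ - Real.log ‖t - L φ‖) := by
    intro φ
    refine (pointwise_hasSum (hLM φ)).congr_fun fun n => ?_
    rw [hf]
    simp only
    rw [lpEval_pow (Complex.exp_ne_zero _) (Complex.exp_ne_zero _)]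
  have hfcont : ∀ n, Continuous (f n) := fun n =>
    Complex.continuous_re.comp ((continuous_lpEval_snd _ _).mul continuous_const)
  have hfbound : ∀ n φ, ‖f n φ‖ ≤ r ^ (n+1) := by
    intro n φ
    rw [hf]
    simp only [Real.norm_eq_abs]
    refine le_trans (Complex.abs_re_le_norm _) ?_
    rw [← hrpow n]
    exact mul_en_bound n (hMpow_aux P n θ φ)
  have hLcont : Continuous L := continuous_lpEval_snd _ _
  have hne : ∀ φ, Real.log ‖t - L φ‖ = Real.log ‖t‖ - ∑' n, f n φ := by
    intro φ
    rw [(hfs φ).tsum_eq]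
    ring
  have htsub : ∀ φ, t - L φ ≠ 0 := by
    intro φ h
    have := hLM φ
    rw [sub_eq_zero] at h
    rw [← h] at this
    exact lt_irrefl _ this
  have hlogcont : Continuous fun φ => Real.log ‖t - L φ‖ :=
    ((continuous_const.sub hLcont).norm).log fun φ => norm_ne_zero_iff.mpr (htsub φ)
  have hint : ∀ n, IntegrableOn (f n) (Set.Ioc (0:ℝ) (2 * Real.pi)) volume := fun n =>
    (hfcont n).integrableOn_Ioc
  have hsumnorm : Summable fun n => ∫ φ in Set.Ioc (0:ℝ) (2 * Real.pi), ‖f n φ‖ := by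
    refine Summable.of_nonneg_of_le (fun n => integral_nonneg fun φ => norm_nonneg _)
      (fun n => ?_) (summable_geo_aux hr0 hr1 (2 * Real.pi))
    calc ∫ φ in Set.Ioc (0:ℝ) (2 * Real.pi), ‖f n φ‖
        ≤ ∫ _ in Set.Ioc (0:ℝ) (2 * Real.pi), r ^ (n+1) := by
          refine setIntegral_mono_on ((hfcont n).norm).integrableOn_Ioc
            (integrableOn_const measure_Ioc_lt_top.ne) measurableSet_Ioc
            fun φ _ => hfbound n φ
      _ = 2 * Real.pi * r ^ (n+1) := by
          rw [setIntegral_const, Real.volume_real_Ioc_of_le (by positivity), sub_zero,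
            smul_eq_mul]
  have hswap := MeasureTheory.hasSum_integral_of_summable_integral_norm
    (μ := volume.restrict (Set.Ioc (0:ℝ) (2 * Real.pi))) hint hsumnorm
  have h2pi : (0:ℝ) ≤ 2 * Real.pi := by positivity
  have hfint : ∀ n, (∫ φ in (0:ℝ)..(2 * Real.pi), f n φ) = (innerA (P ^ (n+1)) θ * e n).re := by
    intro n
    have hiic : IntervalIntegrable
        (fun φ : ℝ => lpEval (P ^ (n+1)) (Complex.exp (θ * Complex.I))
          (Complex.exp (φ * Complex.I)) * e n) volume 0 (2 * Real.pi) :=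
      ((continuous_lpEval_snd _ _).mul continuous_const).intervalIntegrable _ _
    have := Complex.reCLM.intervalIntegral_comp_comm hiic
    simp only [Complex.reCLM_apply] at this
    rw [hf]
    simp only
    rw [this, intervalIntegral.integral_mul_const]
    rfl
  calc (∫ φ in (0:ℝ)..(2 * Real.pi), Real.log ‖t - L φ‖)
      = ∫ φ in (0:ℝ)..(2 * Real.pi), (Real.log ‖t‖ - ∑' n, f n φ) :=
        intervalIntegral.integral_congr fun φ _ => hne φ
    _ = (∫ _ in (0:ℝ)..(2 * Real.pi), Real.log ‖t‖)
        - ∫ φ in (0:ℝ)..(2 * Real.pi), ∑' n, f n φ := by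
        refine intervalIntegral.integral_sub (intervalIntegrable_const) ?_
        have : (fun φ => ∑' n, f n φ) = fun φ => Real.log ‖t‖ - Real.log ‖t - L φ‖ := by
          funext φ
          rw [hne φ]
          ring
        rw [this]
        exact (continuous_const.sub hlogcont).intervalIntegrable _ _
    _ = 2 * Real.pi * Real.log ‖t‖ - ∑' n, (innerA (P ^ (n+1)) θ * e n).re := by
        congr 1
        · rw [intervalIntegral.integral_const, smul_eq_mul, sub_zero]
        · rw [intervalIntegral.integral_of_le h2pi, ← hswap.tsum_eq]
          refine tsum_congr fun n => ?_
          rw [← hfint n, intervalIntegral.integral_of_le h2pi]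


/-- For a two-variable complex Laurent polynomial `P` and `t ∈ ℂ` with
`|t| > M = max_{|x|=|y|=1} |P(x,y)|`, the Mahler measure `M(F_t) = exp(m(F_t))` of
`F_t = t - P` equals `|Q(t)|⁻¹`, where `Q(t) = t⁻¹ exp(Σ_{n≥1} c_n t^{-n}/n)` and `c_n`
is the constant term of `P^n` (the series converging absolutely). -/
theorem stmt1 (P : AddMonoidAlgebra ℂ (ℤ × ℤ)) (t : ℂ)
    (ht : sSup {r : ℝ | ∃ x y : ℂ, ‖x‖ = 1 ∧ ‖y‖ = 1 ∧ r = ‖lpEval P x y‖} < ‖t‖) :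
    Summable (fun n : ℕ =>
      ‖(P ^ (n + 1)).coeff (0 : ℤ × ℤ) * t ^ (-((n : ℤ) + 1)) / ((n : ℂ) + 1)‖) ∧
    Real.exp ((1 / (2 * Real.pi) ^ 2) *
        ∫ θ in (0:ℝ)..(2 * Real.pi), ∫ φ in (0:ℝ)..(2 * Real.pi),
          Real.log ‖t - lpEval P (Complex.exp (θ * Complex.I)) (Complex.exp (φ * Complex.I))‖)
      = ‖t⁻¹ * Complex.exp
          (∑' n : ℕ, (P ^ (n + 1)).coeff (0 : ℤ × ℤ) * t ^ (-((n : ℤ) + 1)) / ((n : ℂ) + 1))‖⁻¹ := by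
  have hMt : torusSup P < ‖t‖ := ht
  have htpos : 0 < ‖t‖ := lt_of_le_of_lt (torusSup_nonneg P) hMt
  have ht0 : t ≠ 0 := by
    intro h; rw [h, norm_zero] at htpos; exact lt_irrefl _ htpos
  set M := torusSup P with hM
  set r : ℝ := M / ‖t‖ with hr
  have hr0 : 0 ≤ r := div_nonneg (torusSup_nonneg P) htpos.le
  have hr1 : r < 1 := (div_lt_one htpos).mpr hMt
  have hrpow : ∀ n : ℕ, M ^ (n+1) * (‖t‖ ^ (n+1))⁻¹ = r ^ (n+1) := by
    intro n
    rw [hr, div_pow, div_eq_mul_inv]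
  set e : ℕ → ℂ := fun n => t ^ (-((n:ℤ)+1)) / ((n:ℂ)+1) with he
  set c : ℕ → ℂ := fun n => (P ^ (n + 1)).coeff (0 : ℤ × ℤ) with hc
  have h2pi : (0:ℝ) ≤ 2 * Real.pi := by positivity
  have h2pipos : (0:ℝ) < 2 * Real.pi := by positivity
  -- bound on the constant terms
  have hcbound : ∀ n : ℕ, ‖c n‖ ≤ M ^ (n+1) * 1 := by
    intro n
    have hdi := innerA_integral (P ^ (n+1))
    have hb1 : ∀ θ : ℝ, ‖innerA (P ^ (n+1)) θ‖ ≤ M ^ (n+1) * (2 * Real.pi) :=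
      innerA_norm_le _ (hMpow_aux P n)
    have hb2 : ‖∫ θ in (0:ℝ)..(2 * Real.pi), innerA (P ^ (n+1)) θ‖
        ≤ M ^ (n+1) * (2 * Real.pi) * (2 * Real.pi) := by
      have := intervalIntegral.norm_integral_le_of_norm_le_const
        (C := M ^ (n+1) * (2 * Real.pi)) (f := innerA (P ^ (n+1)))
        (a := 0) (b := 2 * Real.pi) (fun θ _ => hb1 θ)
      rwa [sub_zero, abs_of_nonneg h2pi] at this
    rw [hdi] at hb2
    rw [norm_mul, norm_pow] at hb2
    have hnp : ‖(2 : ℂ) * (Real.pi : ℂ)‖ = 2 * Real.pi := by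
      rw [show ((2:ℂ) * (Real.pi:ℂ)) = ((2 * Real.pi : ℝ) : ℂ) by push_cast; ring,
        Complex.norm_real, Real.norm_of_nonneg h2pi]
    rw [hnp] at hb2
    have hb3 : (2 * Real.pi) ^ 2 * ‖c n‖ ≤ (2 * Real.pi) ^ 2 * (M ^ (n+1) * 1) := by
      calc (2 * Real.pi) ^ 2 * ‖c n‖ ≤ M ^ (n+1) * (2 * Real.pi) * (2 * Real.pi) := hb2
        _ = (2 * Real.pi) ^ 2 * (M ^ (n+1) * 1) := by ring
    exact le_of_mul_le_mul_left hb3 (pow_pos h2pipos 2)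
  have hcb : ∀ n : ℕ, ‖c n‖ ≤ M ^ (n+1) := fun n => by simpa using hcbound n
  have hanorm : ∀ n : ℕ, ‖c n * e n‖ ≤ r ^ (n+1) := by
    intro n
    rw [← hrpow n]
    exact mul_en_bound n (hcb n)
  have hgeo1 : Summable fun n : ℕ => r ^ (n+1) := by
    simpa using summable_geo_aux hr0 hr1 1
  have hsum1 : Summable fun n : ℕ => ‖c n * e n‖ :=
    Summable.of_nonneg_of_le (fun _ => norm_nonneg _) hanorm hgeo1
  have hSsummable : Summable fun n : ℕ => c n * e n := hsum1.of_norm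
  constructor
  · simp only [mul_div_assoc]
    exact hsum1
  simp only [mul_div_assoc]
  set S : ℂ := ∑' n : ℕ, c n * e n with hS
  set G : ℝ → ℝ := fun θ => ∑' n : ℕ, (innerA (P ^ (n+1)) θ * e n).re with hG
  have hFcont : ∀ n : ℕ, Continuous fun θ => (innerA (P ^ (n+1)) θ * e n).re := fun n =>
    Complex.continuous_re.comp ((innerA_cont _).mul continuous_const)
  have hFbound : ∀ (n : ℕ) (θ : ℝ),
      ‖(innerA (P ^ (n+1)) θ * e n).re‖ ≤ 2 * Real.pi * r ^ (n+1) := by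
    intro n θ
    rw [Real.norm_eq_abs]
    refine (Complex.abs_re_le_norm _).trans ?_
    calc ‖innerA (P ^ (n+1)) θ * e n‖
        ≤ M ^ (n+1) * (2 * Real.pi) * (‖t‖ ^ (n+1))⁻¹ :=
          mul_en_bound n (innerA_norm_le _ (hMpow_aux P n) θ)
      _ = 2 * Real.pi * (M ^ (n+1) * (‖t‖ ^ (n+1))⁻¹) := by ring
      _ = 2 * Real.pi * r ^ (n+1) := by rw [hrpow n]
  have hGcont : Continuous G :=
    continuous_tsum hFcont (summable_geo_aux hr0 hr1 (2 * Real.pi)) hFbound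
  have houter_int : ∀ n : ℕ, (∫ θ in (0:ℝ)..(2 * Real.pi), (innerA (P ^ (n+1)) θ * e n).re)
      = (((2 * Real.pi : ℂ) ^ 2) * (c n * e n)).re := by
    intro n
    have hiic : IntervalIntegrable (fun θ => innerA (P ^ (n+1)) θ * e n) volume 0
        (2 * Real.pi) := ((innerA_cont _).mul continuous_const).intervalIntegrable _ _
    have hcomm := Complex.reCLM.intervalIntegral_comp_comm hiic
    simp only [Complex.reCLM_apply] at hcomm
    rw [hcomm, intervalIntegral.integral_mul_const, innerA_integral]
    congr 1
    ring
  have hFint : ∀ n : ℕ, IntegrableOn (fun θ => (innerA (P ^ (n+1)) θ * e n).re)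
      (Set.Ioc (0:ℝ) (2 * Real.pi)) volume := fun n => (hFcont n).integrableOn_Ioc
  have hFsumnorm : Summable fun n : ℕ =>
      ∫ θ in Set.Ioc (0:ℝ) (2 * Real.pi), ‖(innerA (P ^ (n+1)) θ * e n).re‖ := by
    refine Summable.of_nonneg_of_le (fun n => integral_nonneg fun θ => norm_nonneg _)
      (fun n => ?_) (summable_geo_aux hr0 hr1 (2 * Real.pi * (2 * Real.pi)))
    calc ∫ θ in Set.Ioc (0:ℝ) (2 * Real.pi), ‖(innerA (P ^ (n+1)) θ * e n).re‖
        ≤ ∫ _ in Set.Ioc (0:ℝ) (2 * Real.pi), 2 * Real.pi * r ^ (n+1) := by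
          refine setIntegral_mono_on ((hFcont n).norm).integrableOn_Ioc
            (integrableOn_const measure_Ioc_lt_top.ne) measurableSet_Ioc
            fun θ _ => hFbound n θ
      _ = 2 * Real.pi * (2 * Real.pi * r ^ (n+1)) := by
          rw [setIntegral_const, Real.volume_real_Ioc_of_le h2pi, sub_zero,
            smul_eq_mul]
      _ = 2 * Real.pi * (2 * Real.pi) * r ^ (n+1) := by ring
  have hswap2 := MeasureTheory.hasSum_integral_of_summable_integral_norm
    (μ := volume.restrict (Set.Ioc (0:ℝ) (2 * Real.pi))) hFint hFsumnorm
  have hre_term : ∀ n : ℕ, (((2 * Real.pi : ℂ) ^ 2) * (c n * e n)).re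
      = (2 * Real.pi) ^ 2 * (c n * e n).re := by
    intro n
    rw [show ((2 * Real.pi : ℂ) ^ 2) = (((2 * Real.pi) ^ 2 : ℝ) : ℂ) by push_cast; ring,
      Complex.re_ofReal_mul]
  have hSre : (∑' n : ℕ, (c n * e n).re) = S.re := (Complex.re_tsum hSsummable).symm
  have hmain : (∫ θ in (0:ℝ)..(2 * Real.pi), ∫ φ in (0:ℝ)..(2 * Real.pi),
      Real.log ‖t - lpEval P (Complex.exp (θ * Complex.I)) (Complex.exp (φ * Complex.I))‖)
      = (2 * Real.pi) ^ 2 * (Real.log ‖t‖ - S.re) := by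
    calc (∫ θ in (0:ℝ)..(2 * Real.pi), ∫ φ in (0:ℝ)..(2 * Real.pi),
        Real.log ‖t - lpEval P (Complex.exp (θ * Complex.I)) (Complex.exp (φ * Complex.I))‖)
        = ∫ θ in (0:ℝ)..(2 * Real.pi), (2 * Real.pi * Real.log ‖t‖ - G θ) :=
          intervalIntegral.integral_congr fun θ _ => inner_log_int P hMt θ
      _ = (∫ _ in (0:ℝ)..(2 * Real.pi), 2 * Real.pi * Real.log ‖t‖)
          - ∫ θ in (0:ℝ)..(2 * Real.pi), G θ :=
          intervalIntegral.integral_sub intervalIntegrable_const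
            (hGcont.intervalIntegrable _ _)
      _ = 2 * Real.pi * (2 * Real.pi * Real.log ‖t‖)
          - ∑' n : ℕ, (((2 * Real.pi : ℂ) ^ 2) * (c n * e n)).re := by
          congr 1
          · rw [intervalIntegral.integral_const, smul_eq_mul, sub_zero]
          · rw [intervalIntegral.integral_of_le h2pi, ← hswap2.tsum_eq]
            refine tsum_congr fun n => ?_
            rw [← houter_int n, intervalIntegral.integral_of_le h2pi]
      _ = 2 * Real.pi * (2 * Real.pi * Real.log ‖t‖)
          - (2 * Real.pi) ^ 2 * ∑' n : ℕ, (c n * e n).re := by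
          rw [tsum_congr hre_term, tsum_mul_left]
      _ = (2 * Real.pi) ^ 2 * (Real.log ‖t‖ - S.re) := by
          rw [hSre]
          ring
  rw [hmain]
  have harg : (1 / (2 * Real.pi) ^ 2) * ((2 * Real.pi) ^ 2 * (Real.log ‖t‖ - S.re))
      = Real.log ‖t‖ - S.re := by
    field_simp
  rw [harg, norm_mul, norm_inv, Complex.norm_exp,
    mul_inv, inv_inv, Real.exp_sub, Real.exp_log htpos, div_eq_mul_inv]
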